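/- For every peak composition α of n, the multisets {Des(w_c(T)) : T ∈ SPIT(α)} and {Des(w_r(T)) : T ∈ SPIT(α)} are equal (as multisets of subsets of {1,…,n−1}). -/

import Mathlib

namespace PaperSPIT

/-- The `j`-th part (1-indexed) of a composition presented as a list. -/
def part (α : List ℕ) (j : ℕ) : ℕ := α.getD (j - 1) 0

/-- The largest part. -/
def maxPart (α : List ℕ) : ℕ := α.foldr max 0

/-- The composition diagram: boxes `(i, j)` (column `i`, row `j`), both 1-indexed,
rows numbered from bottom to top. -/
def cd (α : List ℕ) : Finset (ℕ × ℕ) :=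
  (Finset.Icc 1 (maxPart α) ×ˢ Finset.Icc 1 α.length).filter fun p => p.1 ≤ part α p.2

/-- `α` is a composition of `n`. -/
def IsComposition (n : ℕ) (α : List ℕ) : Prop :=
  (∀ a ∈ α, 0 < a) ∧ α.sum = n

/-- `α` is a peak composition of `n`: all parts except possibly the last are `> 1`. -/
def IsPeakComposition (n : ℕ) (α : List ℕ) : Prop :=
  IsComposition n α ∧ ∀ i, i + 1 < α.length → 1 < α.getD i 0

/-- A standard filling of `cd α`: a bijection from the boxes onto `{1, …, n}`
(normalized to be `0` off the diagram). -/
def IsStandardFilling (α : List ℕ) (T : ℕ × ℕ → ℕ) : Prop :=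
  Set.BijOn T (cd α : Set (ℕ × ℕ)) (Set.Icc 1 α.sum) ∧
  ∀ p : ℕ × ℕ, p ∉ cd α → T p = 0

def RowsIncrease (α : List ℕ) (T : ℕ × ℕ → ℕ) : Prop :=
  ∀ i j : ℕ, (i, j) ∈ cd α → (i + 1, j) ∈ cd α → T (i, j) < T (i + 1, j)

def RowsWeaklyIncrease (α : List ℕ) (T : ℕ × ℕ → ℕ) : Prop :=
  ∀ i j : ℕ, (i, j) ∈ cd α → (i + 1, j) ∈ cd α → T (i, j) ≤ T (i + 1, j)

def FirstColIncreases (α : List ℕ) (T : ℕ × ℕ → ℕ) : Prop :=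
  ∀ j : ℕ, (1, j) ∈ cd α → (1, j + 1) ∈ cd α → T (1, j) < T (1, j + 1)

/-- Standard immaculate tableau. -/
def IsSIT (α : List ℕ) (T : ℕ × ℕ → ℕ) : Prop :=
  IsStandardFilling α T ∧ RowsIncrease α T ∧ FirstColIncreases α T

/-- Peak-tableau condition: for every `1 ≤ k ≤ n` the boxes with entries `≤ k`
form the diagram of a peak composition. -/
def PeakCond (α : List ℕ) (T : ℕ × ℕ → ℕ) : Prop :=
  ∀ k : ℕ, 1 ≤ k → k ≤ α.sum → ∃ β : List ℕ,
    IsPeakComposition k β ∧ (cd α).filter (fun p => T p ≤ k) = cd β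

/-- Standard peak immaculate tableau. -/
def IsSPIT (α : List ℕ) (T : ℕ × ℕ → ℕ) : Prop := IsSIT α T ∧ PeakCond α T

def SPITset (α : List ℕ) : Set (ℕ × ℕ → ℕ) := {T | IsSPIT α T}

/-- The Young triple condition. -/
def YoungTriple (α : List ℕ) (T : ℕ × ℕ → ℕ) : Prop :=
  ∀ k i j : ℕ, i < j → (k, j) ∈ cd α → (k + 1, i) ∈ cd α → T (k, j) ≤ T (k + 1, i) →
    (k + 1, j) ∈ cd α ∧ T (k + 1, j) < T (k + 1, i)

/-- Standard Young composition tableau. -/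
def IsSYCT (α : List ℕ) (T : ℕ × ℕ → ℕ) : Prop :=
  IsStandardFilling α T ∧ RowsIncrease α T ∧ FirstColIncreases α T ∧ YoungTriple α T

def SYCTset (α : List ℕ) : Set (ℕ × ℕ → ℕ) := {T | IsSYCT α T}

/-- Standard peak Young composition tableau. -/
def IsSPYCT (α : List ℕ) (T : ℕ × ℕ → ℕ) : Prop := IsSYCT α T ∧ PeakCond α T

def SPYCTset (α : List ℕ) : Set (ℕ × ℕ → ℕ) := {T | IsSPYCT α T}

/-- Row reading word `w_r`: rows from top to bottom, each row left to right. -/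
def wR (α : List ℕ) (T : ℕ × ℕ → ℕ) : List ℕ :=
  ((List.range α.length).reverse.map fun j =>
    (List.range (part α (j + 1))).map fun i => T (i + 1, j + 1)).flatten

/-- The `i`-th column of a filling, read bottom to top. -/
def colList (α : List ℕ) (T : ℕ × ℕ → ℕ) (i : ℕ) : List ℕ :=
  ((List.range α.length).filter fun j => decide (i ≤ part α (j + 1))).map
    fun j => T (i, j + 1)

/-- Column reading word `w_c`: columns left to right, each column bottom to top. -/
def wC (α : List ℕ) (T : ℕ × ℕ → ℕ) : List ℕ :=
  ((List.range (maxPart α)).map fun i => colList α T (i + 1)).flatten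

/-- Young reading word `w_Y`: first column top to bottom, then subsequent columns
bottom to top, columns left to right. -/
def wY (α : List ℕ) (T : ℕ × ℕ → ℕ) : List ℕ :=
  (colList α T 1).reverse ++
    ((List.range (maxPart α - 1)).map fun i => colList α T (i + 2)).flatten

/-- Descent set of a word with distinct letters: `i` such that `i` and `i+1` occur
and `i` occurs to the right of `i+1`. -/
def DesWord (w : List ℕ) : Finset ℕ :=
  w.toFinset.filter fun i => (i + 1) ∈ w ∧ w.idxOf (i + 1) < w.idxOf i


section Aux


lemma le_maxPart {α : List ℕ} {a : ℕ} (h : a ∈ α) : a ≤ maxPart α := by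
  induction α with
  | nil => simp at h
  | cons b l ih =>
    rcases List.mem_cons.1 h with rfl | h
    · exact le_max_left _ _
    · exact le_trans (ih h) (le_max_right _ _)

lemma part_le_maxPart {α : List ℕ} {j : ℕ} (h1 : 1 ≤ j) (h2 : j ≤ α.length) :
    part α j ≤ maxPart α := by
  have hlt : j - 1 < α.length := by omega
  have : part α j = α[j-1] := by simp [part, List.getD_eq_getElem?_getD, List.getElem?_eq_getElem hlt]
  rw [this]
  exact le_maxPart (List.getElem_mem hlt)

lemma mem_cd {α : List ℕ} {i j : ℕ} :
    (i, j) ∈ cd α ↔ 1 ≤ i ∧ 1 ≤ j ∧ j ≤ α.length ∧ i ≤ part α j := by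
  simp only [cd, Finset.mem_filter, Finset.mem_product, Finset.mem_Icc]
  constructor
  · rintro ⟨⟨⟨h1, h2⟩, h3, h4⟩, h5⟩; exact ⟨h1, h3, h4, h5⟩
  · rintro ⟨h1, h3, h4, h5⟩
    exact ⟨⟨⟨h1, le_trans h5 (part_le_maxPart h3 h4)⟩, h3, h4⟩, h5⟩

lemma mem_cd' {α : List ℕ} {p : ℕ × ℕ} :
    p ∈ cd α ↔ 1 ≤ p.1 ∧ 1 ≤ p.2 ∧ p.2 ≤ α.length ∧ p.1 ≤ part α p.2 := by
  obtain ⟨i, j⟩ := p; exact mem_cd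

lemma sum_parts {α : List ℕ} : α.sum = ∑ j ∈ Finset.Icc 1 α.length, part α j := by
  have h : α.sum = ∑ i ∈ Finset.range α.length, α.getD i 0 := by
    induction α with
    | nil => simp
    | cons a t ih =>
      rw [List.length_cons, Finset.sum_range_succ']
      simp [ih, add_comm]
  rw [h]
  rw [show Finset.Icc 1 α.length = Finset.map ⟨fun i => i + 1, fun a b h => by simpa using h⟩
      (Finset.range α.length) by
    ext x
    simp only [Finset.mem_Icc, Finset.mem_map, Finset.mem_range, Function.Embedding.coeFn_mk]
    constructor
    · rintro ⟨h1, h2⟩; exact ⟨x - 1, by omega, by show x - 1 + 1 = x; omega⟩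
    · rintro ⟨a, ha, rfl⟩; show 1 ≤ a + 1 ∧ a + 1 ≤ α.length; omega]
  rw [Finset.sum_map]
  simp [part]; rfl

lemma cd_card {α : List ℕ} : (cd α).card = α.sum := by
  classical
  rw [Finset.card_eq_sum_card_fiberwise (f := Prod.snd) (t := Finset.Icc 1 α.length)
    (fun p hp => by rw [Finset.mem_coe, mem_cd'] at hp; exact Finset.mem_coe.2 (Finset.mem_Icc.2 ⟨hp.2.1, hp.2.2.1⟩))]
  rw [sum_parts]
  apply Finset.sum_congr rfl
  intro j hj
  rw [Finset.mem_Icc] at hj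
  rw [show ((cd α).filter fun p => p.2 = j) = (Finset.Icc 1 (part α j)).image (fun i => (i, j)) by
    ext ⟨a, b⟩
    simp only [Finset.mem_filter, mem_cd', Finset.mem_image, Finset.mem_Icc]
    constructor
    · rintro ⟨⟨h1, _, _, h4⟩, rfl⟩; exact ⟨a, ⟨h1, h4⟩, rfl⟩
    · rintro ⟨i, ⟨h1, h2⟩, h⟩
      rw [Prod.mk.injEq] at h
      obtain ⟨rfl, rfl⟩ := h
      exact ⟨⟨h1, hj.1, hj.2, h2⟩, rfl⟩]
  rw [Finset.card_image_of_injective _ (fun a b h => (Prod.mk.injEq .. ▸ h).1)]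
  simp




/-- `p` is read before `q` in the row word. -/
def ordR (p q : ℕ × ℕ) : Prop := q.2 < p.2 ∨ (p.2 = q.2 ∧ p.1 < q.1)

/-- `p` is read before `q` in the column word. -/
def ordC (p q : ℕ × ℕ) : Prop := p.1 < q.1 ∨ (p.1 = q.1 ∧ p.2 < q.2)

instance : DecidablePred (fun pq : (ℕ×ℕ) × (ℕ×ℕ) => ordR pq.1 pq.2) := fun pq => by
  unfold ordR; infer_instance

lemma ordR_asymm {p q : ℕ × ℕ} (h : ordR p q) : ¬ ordR q p := by
  unfold ordR at *; omega

lemma ordR_trans {p q r : ℕ × ℕ} (h1 : ordR p q) (h2 : ordR q r) : ordR p r := by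
  unfold ordR at *; omega

lemma ordR_total {p q : ℕ × ℕ} (h : p ≠ q) : ordR p q ∨ ordR q p := by
  unfold ordR
  rcases p with ⟨a, b⟩; rcases q with ⟨c, d⟩
  have h' : ¬(a = c ∧ b = d) := by simpa [Prod.ext_iff] using h
  omega

lemma ordC_asymm {p q : ℕ × ℕ} (h : ordC p q) : ¬ ordC q p := by
  unfold ordC at *; omega

lemma ordC_trans {p q r : ℕ × ℕ} (h1 : ordC p q) (h2 : ordC q r) : ordC p r := by
  unfold ordC at *; omega

lemma ordC_total {p q : ℕ × ℕ} (h : p ≠ q) : ordC p q ∨ ordC q p := by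
  unfold ordC
  rcases p with ⟨a, b⟩; rcases q with ⟨c, d⟩
  have h' : ¬(a = c ∧ b = d) := by simpa [Prod.ext_iff] using h
  omega

/-- Cells in row reading order. -/
def lR (α : List ℕ) : List (ℕ × ℕ) :=
  ((List.range α.length).reverse.map fun j =>
    (List.range (part α (j + 1))).map fun i => (i + 1, j + 1)).flatten

/-- Cells in column reading order. -/
def lC (α : List ℕ) : List (ℕ × ℕ) :=
  ((List.range (maxPart α)).map fun i =>
    ((List.range α.length).filter fun j => decide (i + 1 ≤ part α (j + 1))).map
      fun j => (i + 1, j + 1)).flatten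

lemma wR_eq_map (α : List ℕ) (T : ℕ × ℕ → ℕ) : wR α T = (lR α).map T := by
  unfold wR lR
  rw [List.map_flatten, List.map_map]
  congr 1
  refine List.map_congr_left (fun j _ => ?_)
  simp [Function.comp, List.map_map]

lemma wC_eq_map (α : List ℕ) (T : ℕ × ℕ → ℕ) : wC α T = (lC α).map T := by
  unfold wC lC colList
  rw [List.map_flatten, List.map_map]
  congr 1
  refine List.map_congr_left (fun i _ => ?_)
  simp [Function.comp, List.map_map]

lemma mem_lR {α : List ℕ} {p : ℕ × ℕ} : p ∈ lR α ↔ p ∈ cd α := by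
  rcases p with ⟨a, b⟩
  simp only [lR, List.mem_flatten, List.mem_map, List.mem_reverse, List.mem_range, mem_cd]
  constructor
  · rintro ⟨l, ⟨j, hj, rfl⟩, hl⟩
    simp only [List.mem_map, List.mem_range] at hl
    obtain ⟨i, hi, h⟩ := hl
    rw [Prod.mk.injEq] at h
    obtain ⟨rfl, rfl⟩ := h
    exact ⟨by omega, by omega, by omega, by omega⟩
  · rintro ⟨h1, h2, h3, h4⟩
    refine ⟨_, ⟨b - 1, by omega, rfl⟩, ?_⟩
    simp only [List.mem_map, List.mem_range]
    refine ⟨a - 1, ?_, by rw [Prod.mk.injEq]; omega⟩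
    rw [show b - 1 + 1 = b by omega]; omega

lemma mem_lC {α : List ℕ} {p : ℕ × ℕ} : p ∈ lC α ↔ p ∈ cd α := by
  rcases p with ⟨a, b⟩
  simp only [lC, List.mem_flatten, List.mem_map, List.mem_range, mem_cd]
  constructor
  · rintro ⟨l, ⟨i, hi, rfl⟩, hl⟩
    simp only [List.mem_map, List.mem_filter, List.mem_range, decide_eq_true_eq] at hl
    obtain ⟨j, ⟨hj, hij⟩, h⟩ := hl
    rw [Prod.mk.injEq] at h
    obtain ⟨rfl, rfl⟩ := h
    exact ⟨by omega, by omega, by omega, by omega⟩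
  · rintro ⟨h1, h2, h3, h4⟩
    have hma : a ≤ maxPart α := le_trans h4 (part_le_maxPart h2 h3)
    refine ⟨_, ⟨a - 1, by omega, rfl⟩, ?_⟩
    simp only [List.mem_map, List.mem_filter, List.mem_range, decide_eq_true_eq]
    exact ⟨b - 1, ⟨by omega, by rw [show a - 1 + 1 = a by omega, show b - 1 + 1 = b by omega]; exact h4⟩,
      by rw [Prod.mk.injEq]; omega⟩

lemma pairwise_lR {α : List ℕ} : (lR α).Pairwise ordR := by
  rw [lR, List.pairwise_flatten]
  constructor
  · intro l hl
    simp only [List.mem_map, List.mem_reverse, List.mem_range] at hl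
    obtain ⟨j, _, rfl⟩ := hl
    rw [List.pairwise_map]
    exact List.pairwise_lt_range.imp (fun h => Or.inr ⟨rfl, by omega⟩)
  · rw [List.pairwise_map, List.pairwise_reverse]
    refine List.pairwise_lt_range.imp ?_
    intro a b hab x hx y hy
    simp only [List.mem_map, List.mem_range] at hx hy
    obtain ⟨i, _, rfl⟩ := hx
    obtain ⟨i', _, rfl⟩ := hy
    exact Or.inl (by simp; omega)

lemma pairwise_lC {α : List ℕ} : (lC α).Pairwise ordC := by
  rw [lC, List.pairwise_flatten]
  constructor
  · intro l hl
    simp only [List.mem_map, List.mem_range] at hl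
    obtain ⟨i, _, rfl⟩ := hl
    rw [List.pairwise_map]
    refine List.Pairwise.imp ?_ (List.Pairwise.filter _ List.pairwise_lt_range)
    intro a b hab
    exact Or.inr ⟨rfl, by omega⟩
  · rw [List.pairwise_map]
    refine List.Pairwise.imp ?_ List.pairwise_lt_range
    intro a b hab x hx y hy
    simp only [List.mem_map, List.mem_filter, List.mem_range] at hx hy
    obtain ⟨i, _, rfl⟩ := hx
    obtain ⟨i', _, rfl⟩ := hy
    exact Or.inl (by simp; omega)


lemma indexOf_cons_ne' {β : Type} [BEq β] [LawfulBEq β] {a b : β} {l : List β} (h : b ≠ a) :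
    List.idxOf a (b :: l) = List.idxOf a l + 1 := by
  rw [List.idxOf_cons, beq_false_of_ne h, cond_false]

lemma indexOf_cons_self' {β : Type} [BEq β] [LawfulBEq β] {a : β} {l : List β} :
    List.idxOf a (a :: l) = 0 := by
  rw [List.idxOf_cons]; simp

lemma pairwise_indexOf_lt {R : ℕ × ℕ → ℕ × ℕ → Prop}
    (hasymm : ∀ p q, R p q → ¬ R q p) {l : List (ℕ × ℕ)} (h : l.Pairwise R)
    {p q : ℕ × ℕ} (hp : p ∈ l) (hq : q ∈ l) (hR : R p q) :
    l.idxOf p < l.idxOf q := by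
  induction l with
  | nil => simp at hp
  | cons a t ih =>
    rw [List.pairwise_cons] at h
    by_cases hpa : p = a
    · subst hpa
      have hqp : q ≠ p := fun hh => hasymm p q hR (hh ▸ hR)
      have hqt : q ∈ t := by
        rcases List.mem_cons.1 hq with hh | hh
        · exact absurd hh hqp
        · exact hh
      rw [indexOf_cons_self', indexOf_cons_ne' (fun hh => hqp hh.symm)]
      omega
    · have hpt : p ∈ t := by
        rcases List.mem_cons.1 hp with hh | hh
        · exact absurd hh hpa
        · exact hh
      have hqa : q ≠ a := by
        intro hh; subst hh
        exact hasymm q p (h.1 p hpt) hR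
      rw [indexOf_cons_ne' (fun hh => hpa hh.symm), indexOf_cons_ne' (fun hh => hqa hh.symm)]
      have := ih h.2 hpt (by
        rcases List.mem_cons.1 hq with hh | hh
        · exact absurd hh hqa
        · exact hh)
      omega

lemma indexOf_map {f : ℕ × ℕ → ℕ} {l : List (ℕ × ℕ)}
    (hinj : ∀ q ∈ l, ∀ p ∈ l, f q = f p → q = p) {p : ℕ × ℕ} (hp : p ∈ l) :
    (l.map f).idxOf (f p) = l.idxOf p := by
  induction l with
  | nil => simp at hp
  | cons a t ih =>
    by_cases hpa : a = p
    · subst hpa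
      rw [List.map_cons, indexOf_cons_self', indexOf_cons_self']
    · have hfa : f a ≠ f p := fun hh =>
        hpa (hinj a List.mem_cons_self p hp hh)
      have hpt : p ∈ t := by
        rcases List.mem_cons.1 hp with hh | hh
        · exact absurd hh.symm hpa
        · exact hh
      rw [List.map_cons, indexOf_cons_ne' hfa, indexOf_cons_ne' hpa,
        ih (fun q hq p' hp' => hinj q (List.mem_cons_of_mem a hq) p' (List.mem_cons_of_mem a hp')) hpt]

/-- Abstract descent predicate: `i` and `i+1` sit in cells `p`, `q` with `q` read before `p`. -/
def DesP (α : List ℕ) (ord : ℕ × ℕ → ℕ × ℕ → Prop) (T : ℕ × ℕ → ℕ) (i : ℕ) : Prop :=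
  ∃ p ∈ cd α, ∃ q ∈ cd α, T p = i ∧ T q = i + 1 ∧ ord q p

lemma mem_desWord_iff {α : List ℕ} {T : ℕ × ℕ → ℕ}
    {ord : ℕ × ℕ → ℕ × ℕ → Prop} {l : List (ℕ × ℕ)}
    (hmem : ∀ p : ℕ × ℕ, p ∈ l ↔ p ∈ cd α) (hpw : l.Pairwise ord)
    (htot : ∀ p q : ℕ × ℕ, p ≠ q → ord p q ∨ ord q p)
    (hasymm : ∀ p q : ℕ × ℕ, ord p q → ¬ ord q p)
    (hT : IsStandardFilling α T) {i : ℕ} :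
    i ∈ DesWord (l.map T) ↔ DesP α ord T i := by
  have hinj : ∀ q ∈ l, ∀ p ∈ l, T q = T p → q = p := by
    intro q hq p hp h
    exact hT.1.2.1 ((hmem q).1 hq) ((hmem p).1 hp) h
  rw [DesWord, Finset.mem_filter, List.mem_toFinset]
  constructor
  · rintro ⟨h1, h2, h3⟩
    obtain ⟨p, hp, hTp⟩ := List.mem_map.1 h1
    obtain ⟨q, hq, hTq⟩ := List.mem_map.1 h2
    rw [← hTq, ← hTp, indexOf_map hinj hp, indexOf_map hinj hq] at h3
    have hpq : q ≠ p := by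
      intro hh; subst hh; omega
    refine ⟨p, (hmem p).1 hp, q, (hmem q).1 hq, hTp, hTq, ?_⟩
    rcases htot q p hpq with h | h
    · exact h
    · exact absurd (pairwise_indexOf_lt (fun a b => hasymm a b) hpw hp hq h) (by omega)
  · rintro ⟨p, hp, q, hq, hTp, hTq, hord⟩
    have hp' : p ∈ l := (hmem p).2 hp
    have hq' : q ∈ l := (hmem q).2 hq
    refine ⟨?_, ?_, ?_⟩
    · exact List.mem_map.2 ⟨p, hp', hTp⟩
    · exact List.mem_map.2 ⟨q, hq', hTq⟩
    · rw [← hTq, ← hTp, indexOf_map hinj hp', indexOf_map hinj hq']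
      exact pairwise_indexOf_lt (fun a b => hasymm a b) hpw hq' hp' hord

lemma mem_desWord_wR {α : List ℕ} {T : ℕ × ℕ → ℕ} (hT : IsStandardFilling α T) {i : ℕ} :
    i ∈ DesWord (wR α T) ↔ DesP α ordR T i := by
  rw [wR_eq_map]
  exact mem_desWord_iff (fun p => mem_lR) pairwise_lR (fun p q => ordR_total)
    (fun p q => ordR_asymm) hT

lemma mem_desWord_wC {α : List ℕ} {T : ℕ × ℕ → ℕ} (hT : IsStandardFilling α T) {i : ℕ} :
    i ∈ DesWord (wC α T) ↔ DesP α ordC T i := by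
  rw [wC_eq_map]
  exact mem_desWord_iff (fun p => mem_lC) pairwise_lC (fun p q => ordC_total)
    (fun p q => ordC_asymm) hT


/-- Local characterization of SPITs: standard filling + rows increase + interleaving of the
first two columns. -/
def LocalSPIT (α : List ℕ) (T : ℕ × ℕ → ℕ) : Prop :=
  IsStandardFilling α T ∧ RowsIncrease α T ∧
    (∀ j, 1 ≤ j → j + 1 ≤ α.length → T (2, j) < T (1, j + 1))

section Structure

variable {n : ℕ} {α : List ℕ} {T : ℕ × ℕ → ℕ}

lemma parts_pos (hα : IsPeakComposition n α) {j : ℕ} (h1 : 1 ≤ j) (h2 : j ≤ α.length) :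
    1 ≤ part α j := by
  have hlt : j - 1 < α.length := by omega
  have : part α j = α[j-1] := by
    simp [part, List.getD_eq_getElem?_getD, List.getElem?_eq_getElem hlt]
  rw [this]
  exact hα.1.1 _ (List.getElem_mem hlt)

lemma parts_ge_two (hα : IsPeakComposition n α) {j : ℕ} (h1 : 1 ≤ j) (h2 : j + 1 ≤ α.length) :
    2 ≤ part α j := by
  have := hα.2 (j - 1) (by omega)
  have heq : part α j = α.getD (j-1) 0 := rfl
  omega

lemma row_mono (hR : RowsIncrease α T) {i i' j : ℕ} (h : (i, j) ∈ cd α)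
    (h1 : 1 ≤ i') (h2 : i' ≤ i) : T (i', j) ≤ T (i, j) := by
  induction i with
  | zero => omega
  | succ m ih =>
    rcases Nat.eq_or_lt_of_le h2 with rfl | hlt
    · exact le_refl _
    · have hm : (m, j) ∈ cd α := by
        rw [mem_cd] at h ⊢
        exact ⟨by omega, h.2.1, h.2.2.1, by omega⟩
      exact le_trans (ih hm (by omega)) (le_of_lt (hR m j hm h))

lemma col_chain (hα : IsPeakComposition n α) (hL : LocalSPIT α T) {j : ℕ}
    (h1 : 1 ≤ j) (h2 : j + 1 ≤ α.length) : T (1, j) < T (1, j + 1) := by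
  have h2j : ((1 + 1 : ℕ), j) ∈ cd α :=
    mem_cd.2 ⟨by omega, h1, by omega, by have := parts_ge_two hα h1 h2; omega⟩
  have h1j : ((1 : ℕ), j) ∈ cd α := mem_cd.2 ⟨by omega, h1, by omega, parts_pos hα h1 (by omega)⟩
  have h12 : T (1, j) < T (1 + 1, j) := hL.2.1 1 j h1j h2j
  have h2 : T (2, j) < T (1, j + 1) := hL.2.2 j h1 h2
  have he : ((1 + 1 : ℕ), j) = ((2 : ℕ), j) := rfl
  rw [he] at h12
  exact lt_trans h12 h2

lemma col_mono (hα : IsPeakComposition n α) (hL : LocalSPIT α T) {j j' : ℕ}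
    (h1 : 1 ≤ j) (h2 : j ≤ j') (h3 : j' ≤ α.length) : T (1, j) ≤ T (1, j') := by
  induction j' with
  | zero => omega
  | succ m ih =>
    rcases Nat.eq_or_lt_of_le h2 with rfl | hlt
    · exact le_refl _
    · exact le_trans (ih (by omega) (by omega)) (le_of_lt (col_chain hα hL (by omega) h3))

/-- A down-closed subset of `Icc 1 ℓ` is an initial interval. -/
lemma downset_eq_Icc {ℓ : ℕ} {s : Finset ℕ} (hs : s ⊆ Finset.Icc 1 ℓ)
    (hdc : ∀ a b : ℕ, 1 ≤ a → a ≤ b → b ∈ s → a ∈ s) : s = Finset.Icc 1 s.card := by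
  ext x
  simp only [Finset.mem_Icc]
  constructor
  · intro hx
    have h1 : 1 ≤ x := (Finset.mem_Icc.1 (hs hx)).1
    have hsub : Finset.Icc 1 x ⊆ s := by
      intro y hy
      rw [Finset.mem_Icc] at hy
      exact hdc y x hy.1 hy.2 hx
    have := Finset.card_le_card hsub
    simp only [Nat.card_Icc] at this
    exact ⟨h1, by omega⟩
  · rintro ⟨h1, h2⟩
    by_contra hx
    have hsub : s ⊆ Finset.Icc 1 (x - 1) := by
      intro y hy
      rw [Finset.mem_Icc]
      refine ⟨(Finset.mem_Icc.1 (hs hy)).1, ?_⟩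
      by_contra hy2
      exact hx (hdc x y h1 (by omega) hy)
    have := Finset.card_le_card hsub
    simp only [Nat.card_Icc] at this
    omega

lemma card_le_filter_cd {k : ℕ} (hT : IsStandardFilling α T) (hk1 : 1 ≤ k) (hk2 : k ≤ α.sum) :
    ((cd α).filter fun p => T p ≤ k).card = k := by
  classical
  have himg : T '' ((cd α).filter fun p => T p ≤ k : Finset (ℕ × ℕ)) = Set.Icc 1 k := by
    ext v
    simp only [Set.mem_image, Finset.coe_filter, Set.mem_setOf_eq, Set.mem_Icc]
    constructor
    · rintro ⟨p, ⟨hp, hpk⟩, rfl⟩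
      exact ⟨(hT.1.1 hp).1, hpk⟩
    · rintro ⟨h1, h2⟩
      obtain ⟨p, hp, rfl⟩ := hT.1.2.2 (Set.mem_Icc.2 ⟨h1, le_trans h2 hk2⟩)
      exact ⟨p, ⟨hp, h2⟩, rfl⟩
  have hinj : Set.InjOn T ((cd α).filter fun p => T p ≤ k : Finset (ℕ × ℕ)) := by
    intro a ha b hb hab
    simp only [Finset.coe_filter, Set.mem_setOf_eq] at ha hb
    exact hT.1.2.1 ha.1 hb.1 hab
  have := Set.ncard_image_of_injOn hinj
  rw [himg] at this
  rw [Set.ncard_coe_finset] at this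
  rw [← this, ← Finset.coe_Icc, Set.ncard_coe_finset]
  simp

theorem spit_iff_local (hα : IsPeakComposition n α) :
    IsSPIT α T ↔ LocalSPIT α T := by
  constructor
  · rintro ⟨⟨hSF, hRI, hFC⟩, hPk⟩
    refine ⟨hSF, hRI, ?_⟩
    intro j hj hj1
    set k := T (1, j + 1) with hk
    have h1j1 : (1, j + 1) ∈ cd α :=
      mem_cd.2 ⟨le_refl _, by omega, hj1, parts_pos hα (by omega) hj1⟩
    have h2j : (2, j) ∈ cd α := mem_cd.2 ⟨by omega, hj, by omega, parts_ge_two hα hj hj1⟩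
    have hkIcc := hSF.1.1 (by exact_mod_cast h1j1 : ((1, j+1) : ℕ × ℕ) ∈ (cd α : Set (ℕ × ℕ)))
    rw [Set.mem_Icc] at hkIcc
    obtain ⟨β, hβpk, hβeq⟩ := hPk k hkIcc.1 hkIcc.2
    have hmem1 : ((1 : ℕ), j + 1) ∈ cd β := by
      rw [← hβeq, Finset.mem_filter]
      exact ⟨h1j1, le_refl _⟩
    rw [mem_cd] at hmem1
    by_contra hcon
    push_neg at hcon
    have hne : T (2, j) ≠ k := fun hh =>
      (by simp : ((2 : ℕ), j) ≠ ((1 : ℕ), j + 1)) (hSF.1.2.1 h2j h1j1 hh)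
    have h2k : ¬ (T (2, j) ≤ k) := by omega
    have hmem2 : ((2 : ℕ), j) ∉ cd β := by
      rw [← hβeq, Finset.mem_filter]
      rintro ⟨_, hh⟩
      exact h2k hh
    rw [mem_cd] at hmem2
    push_neg at hmem2
    have hple : part β j ≤ 1 := by
      have := hmem2 (by omega) hj (by omega)
      omega
    have := hβpk.2 (j - 1) (by omega)
    have heq : part β j = β.getD (j-1) 0 := rfl
    omega
  · rintro hL
    obtain ⟨hSF, hRI, hIC⟩ := hL
    have hFC : FirstColIncreases α T := by
      intro j hj hj1
      rw [mem_cd] at hj hj1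
      exact col_chain hα ⟨hSF, hRI, hIC⟩ hj.2.1 hj1.2.2.1
    refine ⟨⟨hSF, hRI, hFC⟩, ?_⟩
    intro k hk1 hk2
    classical
    -- the set of rows reaching level k
    set rows : Finset ℕ := (Finset.Icc 1 α.length).filter (fun j => T (1, j) ≤ k) with hrows
    set m : ℕ := rows.card with hm
    have hrowsIcc : rows = Finset.Icc 1 m := by
      refine downset_eq_Icc (Finset.filter_subset _ _) ?_
      intro a b ha hab hb
      simp only [hrows, Finset.mem_filter, Finset.mem_Icc] at hb ⊢
      refine ⟨⟨ha, by omega⟩, le_trans (col_mono hα ⟨hSF, hRI, hIC⟩ ha hab hb.1.2) hb.2⟩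
    have hmle : m ≤ α.length := by
      have := Finset.card_le_card (Finset.filter_subset (fun j => T (1, j) ≤ k) (Finset.Icc 1 α.length))
      simpa [hm] using this
    have hrow_iff : ∀ j, 1 ≤ j → j ≤ α.length → (T (1, j) ≤ k ↔ j ≤ m) := by
      intro j h1 h2
      constructor
      · intro hh
        have : j ∈ rows := by simp [hrows, Finset.mem_filter, Finset.mem_Icc, h1, h2, hh]
        rw [hrowsIcc, Finset.mem_Icc] at this
        exact this.2
      · intro hh
        have : j ∈ rows := by rw [hrowsIcc, Finset.mem_Icc]; exact ⟨h1, hh⟩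
        simp only [hrows, Finset.mem_filter] at this
        exact this.2
    -- row counts
    set c : ℕ → ℕ := fun j => ((Finset.Icc 1 (part α j)).filter fun i => T (i, j) ≤ k).card with hc
    have hrowIcc : ∀ j, 1 ≤ j → j ≤ α.length →
        ((Finset.Icc 1 (part α j)).filter fun i => T (i, j) ≤ k) = Finset.Icc 1 (c j) := by
      intro j h1 h2
      refine downset_eq_Icc (Finset.filter_subset _ _) ?_
      intro a b ha hab hb
      simp only [Finset.mem_filter, Finset.mem_Icc] at hb ⊢
      have hbcd : (b, j) ∈ cd α := mem_cd.2 ⟨by omega, h1, h2, hb.1.2⟩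
      refine ⟨⟨ha, by omega⟩, le_trans (row_mono hRI hbcd ha hab) hb.2⟩
    have hβlen : ((List.range m).map fun t => c (t + 1)).length = m := by simp
    have hpartβ : ∀ j, 1 ≤ j → j ≤ m → part ((List.range m).map fun t => c (t + 1)) j = c j := by
      intro j h1 h2
      have hlt : j - 1 < ((List.range m).map fun t => c (t + 1)).length := by omega
      rw [part, List.getD_eq_getElem _ _ hlt]
      rw [List.getElem_map, List.getElem_range]
      congr 1
      omega
    have hcd_row : ∀ i j : ℕ, 1 ≤ i → 1 ≤ j → j ≤ α.length → i ≤ part α j → (i, j) ∈ cd α :=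
      fun i j a b cc d => mem_cd.2 ⟨a, b, cc, d⟩
    have hcpos : ∀ j, 1 ≤ j → j ≤ m → 1 ≤ c j := by
      intro j h1 h2
      have h1mem : (1 : ℕ) ∈ (Finset.Icc 1 (part α j)).filter fun i => T (i, j) ≤ k := by
        rw [Finset.mem_filter, Finset.mem_Icc]
        exact ⟨⟨le_refl _, parts_pos hα h1 (by omega)⟩, (hrow_iff j h1 (by omega)).2 h2⟩
      have := Finset.card_pos.2 ⟨1, h1mem⟩
      simp only [hc]; omega
    have hctwo : ∀ j, 1 ≤ j → j + 1 ≤ m → 2 ≤ c j := by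
      intro j h1 h2
      have hj1 : j + 1 ≤ α.length := by omega
      have h2mem : (2 : ℕ) ∈ (Finset.Icc 1 (part α j)).filter fun i => T (i, j) ≤ k := by
        rw [Finset.mem_filter, Finset.mem_Icc]
        refine ⟨⟨by omega, parts_ge_two hα h1 hj1⟩, ?_⟩
        have := hIC j h1 hj1
        have := (hrow_iff (j + 1) (by omega) (by omega)).2 h2
        omega
      have hsub : Finset.Icc 1 2 ⊆ (Finset.Icc 1 (part α j)).filter fun i => T (i, j) ≤ k := by
        rw [hrowIcc j h1 (by omega)] at h2mem ⊢
        intro x hx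
        rw [Finset.mem_Icc] at hx h2mem ⊢
        omega
      have := Finset.card_le_card hsub
      simp only [Nat.card_Icc] at this
      simp only [hc]; omega
    have hczero : ∀ j, 1 ≤ j → j ≤ α.length → m < j → c j = 0 := by
      intro j h1 h2 h3
      rw [hc, Finset.card_eq_zero]
      rw [Finset.eq_empty_iff_forall_notMem]
      intro i hi
      rw [Finset.mem_filter, Finset.mem_Icc] at hi
      have hik : T (1, j) ≤ T (i, j) :=
        row_mono hRI (hcd_row i j (by omega) h1 h2 hi.1.2) (le_refl 1) hi.1.1
      have : ¬ (T (1, j) ≤ k) := fun hh => by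
        have := (hrow_iff j h1 h2).1 hh; omega
      omega
    have hsumIcc : ∑ j ∈ Finset.Icc 1 α.length, c j = k := by
      rw [← card_le_filter_cd hSF hk1 hk2]
      rw [Finset.card_eq_sum_card_fiberwise (f := Prod.snd) (t := Finset.Icc 1 α.length)
        (fun p hp => by
          rw [Finset.mem_coe, Finset.mem_filter, mem_cd'] at hp
          exact Finset.mem_coe.2 (Finset.mem_Icc.2 ⟨hp.1.2.1, hp.1.2.2.1⟩))]
      refine (Finset.sum_congr rfl ?_).symm
      intro j hj
      rw [Finset.mem_Icc] at hj
      rw [show (((cd α).filter fun p => T p ≤ k).filter fun p => p.2 = j)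
          = ((Finset.Icc 1 (part α j)).filter fun i => T (i, j) ≤ k).image (fun i => (i, j)) by
        ext ⟨a, b⟩
        simp only [Finset.mem_filter, mem_cd', Finset.mem_image, Finset.mem_Icc]
        constructor
        · rintro ⟨⟨⟨h1, _, _, h4⟩, h5⟩, rfl⟩
          exact ⟨a, ⟨⟨h1, h4⟩, h5⟩, rfl⟩
        · rintro ⟨i, ⟨⟨hi1, hi2⟩, hi3⟩, h⟩
          rw [Prod.mk.injEq] at h
          obtain ⟨rfl, rfl⟩ := h
          exact ⟨⟨⟨hi1, hj.1, hj.2, hi2⟩, hi3⟩, rfl⟩]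
      rw [Finset.card_image_of_injective _ (fun a b h => (Prod.mk.injEq .. ▸ h).1)]
    have hβsum : ((List.range m).map fun t => c (t + 1)).sum = k := by
      have hA : ((List.range m).map fun t => c (t + 1)).sum = ∑ t ∈ Finset.range m, c (t + 1) := by
        induction m with
        | zero => simp
        | succ mm ih => rw [Finset.sum_range_succ, List.range_succ]; simp [ih]
      have hB : ∑ t ∈ Finset.range m, c (t + 1) = ∑ j ∈ Finset.Icc 1 m, c j := by
        rw [show Finset.Icc 1 m = Finset.map ⟨fun i => i + 1, fun a b h => by simpa using h⟩
            (Finset.range m) by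
          ext x
          simp only [Finset.mem_Icc, Finset.mem_map, Finset.mem_range, Function.Embedding.coeFn_mk]
          constructor
          · rintro ⟨h1, h2⟩; exact ⟨x - 1, by omega, by show x - 1 + 1 = x; omega⟩
          · rintro ⟨a, ha, rfl⟩; show 1 ≤ a + 1 ∧ a + 1 ≤ m; omega]
        rw [Finset.sum_map]
        rfl
      have hC : ∑ j ∈ Finset.Icc 1 m, c j = ∑ j ∈ Finset.Icc 1 α.length, c j := by
        refine Finset.sum_subset ?_ ?_
        · intro x hx; rw [Finset.mem_Icc] at hx ⊢; omega
        · intro x hx1 hx2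
          rw [Finset.mem_Icc] at hx1 hx2
          exact hczero x hx1.1 hx1.2 (by omega)
      rw [hA, hB, hC, hsumIcc]
    refine ⟨(List.range m).map (fun t => c (t + 1)), ⟨⟨?_, hβsum⟩, ?_⟩, ?_⟩
    · intro a ha
      rw [List.mem_map] at ha
      obtain ⟨t, ht, rfl⟩ := ha
      rw [List.mem_range] at ht
      exact hcpos (t + 1) (by omega) (by omega)
    · intro i hi
      rw [hβlen] at hi
      have : ((List.range m).map fun t => c (t + 1)).getD i 0 = part ((List.range m).map fun t => c (t + 1)) (i + 1) := by
        simp [part]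
      rw [this, hpartβ (i + 1) (by omega) (by omega)]
      exact hctwo (i + 1) (by omega) hi
    · ext ⟨i, j⟩
      rw [Finset.mem_filter, mem_cd, mem_cd, hβlen]
      constructor
      · rintro ⟨⟨h1, h2, h3, h4⟩, h5⟩
        have hjm : j ≤ m := by
          refine (hrow_iff j h2 h3).1 ?_
          exact le_trans (row_mono hRI (hcd_row i j h1 h2 h3 h4) (le_refl 1) h1) h5
        have himem : i ∈ Finset.Icc 1 (c j) := by
          rw [← hrowIcc j h2 h3, Finset.mem_filter, Finset.mem_Icc]
          exact ⟨⟨h1, h4⟩, h5⟩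
        rw [Finset.mem_Icc] at himem
        exact ⟨h1, h2, hjm, by rw [hpartβ j h2 hjm]; exact himem.2⟩
      · rintro ⟨h1, h2, h3, h4⟩
        rw [hpartβ j h2 h3] at h4
        have himem : i ∈ (Finset.Icc 1 (part α j)).filter fun i => T (i, j) ≤ k := by
          rw [hrowIcc j h2 (by omega), Finset.mem_Icc]
          exact ⟨h1, h4⟩
        rw [Finset.mem_filter, Finset.mem_Icc] at himem
        exact ⟨⟨h1, h2, by omega, himem.1.2⟩, himem.2⟩

end Structure


section Blocks

open scoped Classical

variable {α : List ℕ} {S : Finset ℕ} {T : ℕ × ℕ → ℕ}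

/-- Block index of a value relative to the cut set `S`. -/
noncomputable def blk (S : Finset ℕ) (v : ℕ) : ℕ := (S.filter (· < v)).card

lemma blk_zero : blk S 0 = 0 := by
  unfold blk
  rw [Finset.card_eq_zero, Finset.filter_eq_empty_iff]
  intro x _
  omega

lemma blk_mono {v w : ℕ} (h : v ≤ w) : blk S v ≤ blk S w := by
  apply Finset.card_le_card
  intro x hx
  rw [Finset.mem_filter] at hx ⊢
  exact ⟨hx.1, by have := hx.2; omega⟩

lemma blk_succ {v : ℕ} : blk S (v + 1) = blk S v + (if v ∈ S then 1 else 0) := by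
  unfold blk
  have hsplit : S.filter (· < v + 1) = S.filter (· < v) ∪ S.filter (· = v) := by
    rw [← Finset.filter_or]
    apply Finset.filter_congr
    intro x _
    constructor
    · intro h; omega
    · intro h; omega
  rw [hsplit, Finset.card_union_of_disjoint (by
    rw [Finset.disjoint_filter]
    intro x _ h1 h2
    omega)]
  congr 1
  rw [Finset.filter_eq']
  split <;> simp

lemma mem_of_blk_succ_ne {v : ℕ} (h : blk S v ≠ blk S (v + 1)) : v ∈ S := by
  by_contra hv
  rw [blk_succ, if_neg hv] at h
  omega

/-- Transfer counts along a standard filling. -/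
lemma card_filter_of_standard (hT : IsStandardFilling α T) (h : ℕ → Prop) [DecidablePred h] :
    ((cd α).filter fun p => h (T p)).card = ((Finset.Icc 1 α.sum).filter fun v => h v).card := by
  apply Finset.card_bij (fun p _ => T p)
  · intro p hp
    rw [Finset.mem_filter] at hp
    have := hT.1.1 hp.1
    rw [Set.mem_Icc] at this
    exact Finset.mem_filter.2 ⟨Finset.mem_Icc.2 this, hp.2⟩
  · intro p hp q hq hpq
    rw [Finset.mem_filter] at hp hq
    exact hT.1.2.1 hp.1 hq.1 hpq
  · intro v hv
    rw [Finset.mem_filter, Finset.mem_Icc] at hv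
    obtain ⟨p, hp, rfl⟩ := hT.1.2.2 (Set.mem_Icc.2 hv.1)
    exact ⟨p, Finset.mem_filter.2 ⟨hp, hv.2⟩, rfl⟩

section Ord

variable {n : ℕ} {ord : ℕ × ℕ → ℕ × ℕ → Prop}

/-- Consecutive values in the same block are read in increasing order. -/
lemma sorted_within_block_consec
    (htot : ∀ p q : ℕ × ℕ, p ≠ q → ord p q ∨ ord q p)
    (hasym : ∀ p q : ℕ × ℕ, ord p q → ¬ ord q p)
    (hL : LocalSPIT α T)
    (hDes : ∀ i, DesP α ord T i → i ∈ S) {p q : ℕ × ℕ}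
    (hp : p ∈ cd α) (hq : q ∈ cd α) (hcons : T q = T p + 1)
    (hblk : blk S (T p) = blk S (T q)) : ord p q := by
  have hne : p ≠ q := fun hh => by rw [hh] at hcons; omega
  rcases htot p q hne with h | h
  · exact h
  · exfalso
    have : T p ∈ S := hDes (T p) ⟨p, hp, q, hq, rfl, hcons, h⟩
    rw [hcons, blk_succ, if_pos this] at hblk
    omega

lemma sorted_within_block
    (htot : ∀ p q : ℕ × ℕ, p ≠ q → ord p q ∨ ord q p)
    (hasym : ∀ p q : ℕ × ℕ, ord p q → ¬ ord q p)
    (htrans : ∀ p q r : ℕ × ℕ, ord p q → ord q r → ord p r)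
    (hL : LocalSPIT α T)
    (hDes : ∀ i, DesP α ord T i → i ∈ S) {p q : ℕ × ℕ}
    (hp : p ∈ cd α) (hq : q ∈ cd α) (hlt : T p < T q)
    (hblk : blk S (T p) = blk S (T q)) : ord p q := by
  have key : ∀ d p q, p ∈ cd α → q ∈ cd α → T p < T q → T q ≤ T p + d →
      blk S (T p) = blk S (T q) → ord p q := by
    intro d
    induction d with
    | zero => intro p q _ _ h1 h2 _; omega
    | succ d ih =>
      intro p q hp hq hlt hle hblk
      by_cases hcons : T q = T p + 1
      · exact sorted_within_block_consec (ord := ord) htot hasym hL hDes hp hq hcons hblk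
      · have hTq : T q ∈ Set.Icc 1 α.sum := hL.1.1.1 hq
        rw [Set.mem_Icc] at hTq
        have hval : (T q - 1) ∈ Set.Icc 1 α.sum := Set.mem_Icc.2 ⟨by omega, by omega⟩
        obtain ⟨r, hr, hTr⟩ := hL.1.1.2.2 hval
        have hb1 : blk S (T p) ≤ blk S (T r) := blk_mono (by omega)
        have hb2 : blk S (T r) ≤ blk S (T q) := blk_mono (by omega)
        have hblk1 : blk S (T p) = blk S (T r) := by omega
        have hblk2 : blk S (T r) = blk S (T q) := by omega
        have h1 : ord p r := ih p r hp hr (by omega) (by omega) hblk1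
        have h2 : ord r q := sorted_within_block_consec (ord := ord) htot hasym hL hDes hr hq
          (by omega) hblk2
        exact htrans p r q h1 h2
  exact key (T q) p q hp hq hlt (by omega) hblk

end Ord

/-- Strict comparison used to rank cells: first by level, then by reading order. -/
def LTg (ord : ℕ × ℕ → ℕ × ℕ → Prop) (g : ℕ × ℕ → ℕ) (q p : ℕ × ℕ) : Prop :=
  g q < g p ∨ (g q = g p ∧ ord q p)

/-- Rebuild a filling from a level function, ordering each level by `ord`. -/
noncomputable def rebuild (α : List ℕ) (ord : ℕ × ℕ → ℕ × ℕ → Prop) (g : ℕ × ℕ → ℕ) :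
    ℕ × ℕ → ℕ := fun p =>
  if p ∈ cd α then 1 + ((cd α).filter fun q => LTg ord g q p).card else 0

/-- Admissible level functions. -/
def IsG (α : List ℕ) (S : Finset ℕ) (g : ℕ × ℕ → ℕ) : Prop :=
  (∀ i j : ℕ, (i, j) ∈ cd α → (i + 1, j) ∈ cd α → g (i, j) ≤ g (i + 1, j)) ∧
  (∀ j : ℕ, 1 ≤ j → j + 1 ≤ α.length → g (2, j) < g (1, j + 1)) ∧
  (∀ b : ℕ, ((cd α).filter fun p => g p ≤ b).card
    = ((Finset.Icc 1 α.sum).filter fun v => blk S v ≤ b).card)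

section Ord2

variable {ord : ℕ × ℕ → ℕ × ℕ → Prop} {g : ℕ × ℕ → ℕ}

lemma LTg_trans (htrans : ∀ p q r : ℕ × ℕ, ord p q → ord q r → ord p r)
    {p q r : ℕ × ℕ} (h1 : LTg ord g p q) (h2 : LTg ord g q r) : LTg ord g p r := by
  rcases h1 with h1 | ⟨h1, h1'⟩ <;> rcases h2 with h2 | ⟨h2, h2'⟩
  · exact Or.inl (by omega)
  · exact Or.inl (by omega)
  · exact Or.inl (by omega)
  · exact Or.inr ⟨by omega, htrans _ _ _ h1' h2'⟩

lemma LTg_irrefl (hasym : ∀ p q : ℕ × ℕ, ord p q → ¬ ord q p) {p : ℕ × ℕ} :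
    ¬ LTg ord g p p := by
  rintro (h | ⟨-, h⟩)
  · omega
  · exact hasym p p h h

lemma LTg_total (htot : ∀ p q : ℕ × ℕ, p ≠ q → ord p q ∨ ord q p)
    {p q : ℕ × ℕ} (hne : p ≠ q) : LTg ord g p q ∨ LTg ord g q p := by
  rcases Nat.lt_trichotomy (g p) (g q) with h | h | h
  · exact Or.inl (Or.inl h)
  · rcases htot p q hne with h' | h'
    · exact Or.inl (Or.inr ⟨h, h'⟩)
    · exact Or.inr (Or.inr ⟨h.symm, h'⟩)
  · exact Or.inr (Or.inl h)

lemma rebuild_lt {α : List ℕ}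
    (htrans : ∀ p q r : ℕ × ℕ, ord p q → ord q r → ord p r)
    (hasym : ∀ p q : ℕ × ℕ, ord p q → ¬ ord q p)
    {p q : ℕ × ℕ} (hp : p ∈ cd α) (hq : q ∈ cd α) (h : LTg ord g p q) :
    rebuild α ord g p < rebuild α ord g q := by
  unfold rebuild
  rw [if_pos hp, if_pos hq]
  have hnotmem : p ∉ (cd α).filter fun r => LTg ord g r p := by
    rw [Finset.mem_filter]
    rintro ⟨-, hh⟩
    exact LTg_irrefl hasym hh
  have hsub : insert p ((cd α).filter fun r => LTg ord g r p)
      ⊆ (cd α).filter fun r => LTg ord g r q := by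
    intro r hr
    rcases Finset.mem_insert.1 hr with rfl | hr
    · exact Finset.mem_filter.2 ⟨hp, h⟩
    · rw [Finset.mem_filter] at hr ⊢
      exact ⟨hr.1, LTg_trans htrans hr.2 h⟩
  have := Finset.card_le_card hsub
  rw [Finset.card_insert_of_notMem hnotmem] at this
  omega

lemma rebuild_lt_iff {α : List ℕ}
    (htot : ∀ p q : ℕ × ℕ, p ≠ q → ord p q ∨ ord q p)
    (htrans : ∀ p q r : ℕ × ℕ, ord p q → ord q r → ord p r)
    (hasym : ∀ p q : ℕ × ℕ, ord p q → ¬ ord q p)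
    {p q : ℕ × ℕ} (hp : p ∈ cd α) (hq : q ∈ cd α) (hne : p ≠ q) :
    rebuild α ord g p < rebuild α ord g q ↔ LTg ord g p q := by
  constructor
  · intro h
    rcases LTg_total htot hne (g := g) with h' | h'
    · exact h'
    · exact absurd (rebuild_lt htrans hasym hq hp h') (by omega)
  · exact rebuild_lt htrans hasym hp hq

lemma rebuild_standard {α : List ℕ}
    (htot : ∀ p q : ℕ × ℕ, p ≠ q → ord p q ∨ ord q p)
    (htrans : ∀ p q r : ℕ × ℕ, ord p q → ord q r → ord p r)
    (hasym : ∀ p q : ℕ × ℕ, ord p q → ¬ ord q p) :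
    IsStandardFilling α (rebuild α ord g) := by
  have hmapsto : ∀ p ∈ cd α, rebuild α ord g p ∈ Set.Icc 1 α.sum := by
    intro p hp
    have hsub : (cd α).filter (fun r => LTg ord g r p) ⊆ (cd α).erase p := by
      intro r hr
      rw [Finset.mem_filter] at hr
      rw [Finset.mem_erase]
      refine ⟨fun hh => ?_, hr.1⟩
      subst hh
      exact LTg_irrefl hasym hr.2
    have h1 := Finset.card_le_card hsub
    rw [Finset.card_erase_of_mem hp, cd_card] at h1
    have h2 : 1 ≤ α.sum := by
      have : 0 < (cd α).card := Finset.card_pos.2 ⟨p, hp⟩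
      rw [cd_card] at this
      omega
    unfold rebuild
    rw [if_pos hp, Set.mem_Icc]
    omega
  have hinj : Set.InjOn (rebuild α ord g) (cd α : Set (ℕ × ℕ)) := by
    intro p hp q hq h
    by_contra hne
    rcases LTg_total htot hne (g := g) with h' | h'
    · have := rebuild_lt htrans hasym (Finset.mem_coe.1 hp) (Finset.mem_coe.1 hq) h'
      omega
    · have := rebuild_lt htrans hasym (Finset.mem_coe.1 hq) (Finset.mem_coe.1 hp) h'
      omega
  refine ⟨⟨fun p hp => hmapsto p (Finset.mem_coe.1 hp), hinj, ?_⟩, fun p hp => by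
    unfold rebuild
    rw [if_neg (fun hh => hp (Finset.mem_coe.2 hh))]⟩
  intro v hv
  rw [Set.mem_Icc] at hv
  have hsurj := Finset.surj_on_of_inj_on_of_card_le
    (s := cd α) (t := Finset.Icc 1 α.sum) (fun p _ => rebuild α ord g p)
    (fun p hp => by
      have := hmapsto p hp
      rw [Set.mem_Icc] at this
      exact Finset.mem_Icc.2 this)
    (fun p q hp hq h => hinj (Finset.mem_coe.2 hp) (Finset.mem_coe.2 hq) h)
    (by rw [Nat.card_Icc, cd_card]; omega)
    v (Finset.mem_Icc.2 hv)
  obtain ⟨p, hp, hpv⟩ := hsurj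
  exact ⟨p, Finset.mem_coe.2 hp, hpv.symm⟩

lemma rebuild_local {n : ℕ} {α : List ℕ} (hα : IsPeakComposition n α)
    (htot : ∀ p q : ℕ × ℕ, p ≠ q → ord p q ∨ ord q p)
    (htrans : ∀ p q r : ℕ × ℕ, ord p q → ord q r → ord p r)
    (hasym : ∀ p q : ℕ × ℕ, ord p q → ¬ ord q p)
    (hcov1 : ∀ i j : ℕ, ord (i, j) (i + 1, j))
    (hcov2 : ∀ j : ℕ, ord (1, j + 1) (2, j))
    (hgw : ∀ i j : ℕ, (i, j) ∈ cd α → (i + 1, j) ∈ cd α → g (i, j) ≤ g (i + 1, j))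
    (hgs : ∀ j : ℕ, 1 ≤ j → j + 1 ≤ α.length → g (2, j) < g (1, j + 1)) :
    LocalSPIT α (rebuild α ord g) := by
  refine ⟨rebuild_standard htot htrans hasym, ?_, ?_⟩
  · intro i j hp hq
    apply rebuild_lt htrans hasym hp hq
    rcases Nat.lt_or_ge (g (i, j)) (g (i + 1, j)) with h | h
    · exact Or.inl h
    · exact Or.inr ⟨by have := hgw i j hp hq; omega, hcov1 i j⟩
  · intro j h1 h2
    have h2j : ((2 : ℕ), j) ∈ cd α := mem_cd.2 ⟨by omega, h1, by omega, parts_ge_two hα h1 h2⟩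
    have h1j1 : ((1 : ℕ), j + 1) ∈ cd α :=
      mem_cd.2 ⟨by omega, by omega, h2, parts_pos hα (by omega) h2⟩
    exact rebuild_lt htrans hasym h2j h1j1 (Or.inl (hgs j h1 h2))

lemma rebuild_congr {α : List ℕ} {g g' : ℕ × ℕ → ℕ}
    (h : ∀ q ∈ cd α, g q = g' q) (p : ℕ × ℕ) :
    rebuild α ord g p = rebuild α ord g' p := by
  unfold rebuild
  by_cases hp : p ∈ cd α
  · rw [if_pos hp, if_pos hp]
    have : ((cd α).filter fun q => LTg ord g q p) = ((cd α).filter fun q => LTg ord g' q p) := by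
      apply Finset.filter_congr
      intro q hq
      unfold LTg
      rw [h q hq, h p hp]
    rw [this]
  · rw [if_neg hp, if_neg hp]

lemma rank_identity
    (htot : ∀ p q : ℕ × ℕ, p ≠ q → ord p q ∨ ord q p)
    (htrans : ∀ p q r : ℕ × ℕ, ord p q → ord q r → ord p r)
    (hasym : ∀ p q : ℕ × ℕ, ord p q → ¬ ord q p)
    {S : Finset ℕ} {T : ℕ × ℕ → ℕ} (hL : LocalSPIT α T)
    (hDes : ∀ i, DesP α ord T i → i ∈ S) {p : ℕ × ℕ} (hp : p ∈ cd α) :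
    rebuild α ord (fun r => blk S (T r)) p = T p := by
  have hTp := hL.1.1.1 (Finset.mem_coe.2 hp)
  rw [Set.mem_Icc] at hTp
  unfold rebuild
  rw [if_pos hp]
  have hiff : ∀ q, q ∈ cd α → (LTg ord (fun r => blk S (T r)) q p ↔ T q < T p) := by
    intro q hq
    constructor
    · rintro (hlt | ⟨heq, hord⟩)
      · have hlt' : blk S (T q) < blk S (T p) := hlt
        by_contra hh
        have := blk_mono (S := S) (by omega : T p ≤ T q)
        omega
      · have heq' : blk S (T q) = blk S (T p) := heq
        by_contra hh
        rcases Nat.lt_or_ge (T p) (T q) with h' | h'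
        · exact hasym p q (sorted_within_block htot hasym htrans hL hDes hp hq h' heq'.symm) hord
        · have hTeq : T q = T p := by omega
          have : q = p := hL.1.1.2.1 (Finset.mem_coe.2 hq) (Finset.mem_coe.2 hp) hTeq
          subst this
          exact hasym q q hord hord
    · intro hlt
      rcases Nat.lt_or_ge (blk S (T q)) (blk S (T p)) with h' | h'
      · exact Or.inl h'
      · have hble : blk S (T q) ≤ blk S (T p) := blk_mono (by omega)
        have heq : blk S (T q) = blk S (T p) := by omega
        exact Or.inr ⟨heq, sorted_within_block htot hasym htrans hL hDes hq hp hlt heq⟩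
  have hcard : ((cd α).filter fun q => LTg ord (fun r => blk S (T r)) q p).card
      = (Finset.Icc 1 (T p - 1)).card := by
    apply Finset.card_bij (fun q _ => T q)
    · intro q hq
      rw [Finset.mem_filter] at hq
      have h1 := hL.1.1.1 (Finset.mem_coe.2 hq.1)
      rw [Set.mem_Icc] at h1
      have h2 := (hiff q hq.1).1 hq.2
      rw [Finset.mem_Icc]
      omega
    · intro q hq r hr hqr
      rw [Finset.mem_filter] at hq hr
      exact hL.1.1.2.1 (Finset.mem_coe.2 hq.1) (Finset.mem_coe.2 hr.1) hqr
    · intro v hv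
      rw [Finset.mem_Icc] at hv
      obtain ⟨q, hq, rfl⟩ := hL.1.1.2.2 (Set.mem_Icc.2 ⟨hv.1, by omega⟩)
      exact ⟨q, Finset.mem_filter.2 ⟨Finset.mem_coe.1 hq, (hiff q (Finset.mem_coe.1 hq)).2 (by omega)⟩, rfl⟩
  rw [hcard, Nat.card_Icc]
  omega

lemma blk_rebuild {S : Finset ℕ}
    (htot : ∀ p q : ℕ × ℕ, p ≠ q → ord p q ∨ ord q p)
    (htrans : ∀ p q r : ℕ × ℕ, ord p q → ord q r → ord p r)
    (hasym : ∀ p q : ℕ × ℕ, ord p q → ¬ ord q p)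
    (hcont : ∀ b : ℕ, ((cd α).filter fun p => g p ≤ b).card
      = ((Finset.Icc 1 α.sum).filter fun v => blk S v ≤ b).card)
    {p : ℕ × ℕ} (hp : p ∈ cd α) : blk S (rebuild α ord g p) = g p := by
  have hstd : IsStandardFilling α (rebuild α ord g) := rebuild_standard htot htrans hasym
  have hv := hstd.1.1 (Finset.mem_coe.2 hp)
  rw [Set.mem_Icc] at hv
  have hMiff : ∀ b v : ℕ, 1 ≤ v → v ≤ α.sum →
      (blk S v ≤ b ↔ v ≤ ((Finset.Icc 1 α.sum).filter fun w => blk S w ≤ b).card) := by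
    intro b v h1 h2
    have hIcc := downset_eq_Icc (ℓ := α.sum)
      (s := (Finset.Icc 1 α.sum).filter fun w => blk S w ≤ b)
      (Finset.filter_subset _ _) ?_
    · constructor
      · intro hh
        have : v ∈ (Finset.Icc 1 α.sum).filter fun w => blk S w ≤ b :=
          Finset.mem_filter.2 ⟨Finset.mem_Icc.2 ⟨h1, h2⟩, hh⟩
        rw [hIcc, Finset.mem_Icc] at this
        exact this.2
      · intro hh
        have : v ∈ (Finset.Icc 1 α.sum).filter fun w => blk S w ≤ b := by
          rw [hIcc, Finset.mem_Icc]
          exact ⟨h1, hh⟩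
        exact (Finset.mem_filter.1 this).2
    · intro a b' ha hab hb
      rw [Finset.mem_filter, Finset.mem_Icc] at hb ⊢
      exact ⟨⟨ha, by omega⟩, le_trans (blk_mono hab) hb.2⟩
  have hval : rebuild α ord g p = 1 + ((cd α).filter fun q => LTg ord g q p).card := by
    unfold rebuild
    rw [if_pos hp]
  have hupper : rebuild α ord g p ≤ ((Finset.Icc 1 α.sum).filter fun v => blk S v ≤ g p).card := by
    rw [← hcont (g p), hval]
    have hnotmem : p ∉ (cd α).filter fun r => LTg ord g r p := by
      rw [Finset.mem_filter]
      rintro ⟨-, hh⟩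
      exact LTg_irrefl hasym hh
    have hsub : insert p ((cd α).filter fun r => LTg ord g r p)
        ⊆ (cd α).filter fun q => g q ≤ g p := by
      intro r hr
      rcases Finset.mem_insert.1 hr with rfl | hr
      · exact Finset.mem_filter.2 ⟨hp, le_refl _⟩
      · rw [Finset.mem_filter] at hr ⊢
        rcases hr.2 with h | ⟨h, -⟩
        · exact ⟨hr.1, by omega⟩
        · exact ⟨hr.1, by omega⟩
    have := Finset.card_le_card hsub
    rw [Finset.card_insert_of_notMem hnotmem] at this
    omega
  have hub : blk S (rebuild α ord g p) ≤ g p :=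
    (hMiff (g p) _ hv.1 hv.2).2 hupper
  rcases Nat.eq_zero_or_pos (g p) with h0 | h0
  · omega
  · have hlower : ((Finset.Icc 1 α.sum).filter fun v => blk S v ≤ g p - 1).card
        < rebuild α ord g p := by
      rw [← hcont (g p - 1), hval]
      have hsub : ((cd α).filter fun q => g q ≤ g p - 1)
          ⊆ (cd α).filter fun q => LTg ord g q p := by
        intro r hr
        rw [Finset.mem_filter] at hr ⊢
        exact ⟨hr.1, Or.inl (by omega)⟩
      have := Finset.card_le_card hsub
      omega
    have : ¬ (blk S (rebuild α ord g p) ≤ g p - 1) := by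
      intro hh
      have := (hMiff (g p - 1) _ hv.1 hv.2).1 hh
      omega
    omega

lemma blkT_isG {n : ℕ} (hα : IsPeakComposition n α) {S : Finset ℕ} {T : ℕ × ℕ → ℕ}
    (htot : ∀ p q : ℕ × ℕ, p ≠ q → ord p q ∨ ord q p)
    (htrans : ∀ p q r : ℕ × ℕ, ord p q → ord q r → ord p r)
    (hasym : ∀ p q : ℕ × ℕ, ord p q → ¬ ord q p)
    (hcov2 : ∀ j : ℕ, ord (1, j + 1) (2, j))
    (hL : LocalSPIT α T) (hDes : ∀ i, DesP α ord T i → i ∈ S) :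
    IsG α S (fun r => blk S (T r)) := by
  refine ⟨?_, ?_, ?_⟩
  · intro i j hp hq
    exact blk_mono (le_of_lt (hL.2.1 i j hp hq))
  · intro j h1 h2
    have h2j : ((2 : ℕ), j) ∈ cd α := mem_cd.2 ⟨by omega, h1, by omega, parts_ge_two hα h1 h2⟩
    have h1j1 : ((1 : ℕ), j + 1) ∈ cd α :=
      mem_cd.2 ⟨by omega, by omega, h2, parts_pos hα (by omega) h2⟩
    have hlt : T (2, j) < T (1, j + 1) := hL.2.2 j h1 h2
    have hble : blk S (T (2, j)) ≤ blk S (T (1, j + 1)) := blk_mono (by omega)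
    rcases Nat.lt_or_ge (blk S (T (2, j))) (blk S (T (1, j + 1))) with h | h
    · exact h
    · exfalso
      have heq : blk S (T (2, j)) = blk S (T (1, j + 1)) := by omega
      exact hasym _ _ (sorted_within_block htot hasym htrans hL hDes h2j h1j1 hlt heq)
        (hcov2 j)
  · intro b
    exact card_filter_of_standard hL.1 (fun v => blk S v ≤ b)

lemma des_rebuild {S : Finset ℕ}
    (htot : ∀ p q : ℕ × ℕ, p ≠ q → ord p q ∨ ord q p)
    (htrans : ∀ p q r : ℕ × ℕ, ord p q → ord q r → ord p r)
    (hasym : ∀ p q : ℕ × ℕ, ord p q → ¬ ord q p)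
    (hcont : ∀ b : ℕ, ((cd α).filter fun p => g p ≤ b).card
      = ((Finset.Icc 1 α.sum).filter fun v => blk S v ≤ b).card) :
    ∀ i, DesP α ord (rebuild α ord g) i → i ∈ S := by
  rintro i ⟨p, hp, q, hq, hTp, hTq, hord⟩
  have h1 : blk S i = g p := by
    rw [← hTp]
    exact blk_rebuild htot htrans hasym hcont hp
  have h2 : blk S (i + 1) = g q := by
    rw [← hTq]
    exact blk_rebuild htot htrans hasym hcont hq
  apply mem_of_blk_succ_ne
  rw [h1, h2]
  intro heq
  have hne : p ≠ q := by
    intro hh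
    rw [hh, hTq] at hTp
    omega
  have hlt : rebuild α ord g p < rebuild α ord g q := by omega
  rcases (rebuild_lt_iff htot htrans hasym hp hq hne).1 hlt with h | ⟨-, h⟩
  · omega
  · exact hasym q p hord h


end Ord2

end Blocks


section Final

open scoped Classical

variable {n : ℕ} {α : List ℕ}

lemma hcov1R : ∀ i j : ℕ, ordR (i, j) (i + 1, j) := fun i j => Or.inr ⟨rfl, Nat.lt_succ_self i⟩
lemma hcov2R : ∀ j : ℕ, ordR (1, j + 1) (2, j) := fun j => Or.inl (Nat.lt_succ_self j)
lemma hcov1C : ∀ i j : ℕ, ordC (i, j) (i + 1, j) := fun i j => Or.inl (Nat.lt_succ_self i)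
lemma hcov2C : ∀ j : ℕ, ordC (1, j + 1) (2, j) := fun j => Or.inl (by omega)

theorem subset_count_eq (hα : IsPeakComposition n α) (S : Finset ℕ) :
    {T | IsSPIT α T ∧ ∀ i, DesP α ordC T i → i ∈ S}.ncard
      = {T | IsSPIT α T ∧ ∀ i, DesP α ordR T i → i ∈ S}.ncard := by
  set A := {T | IsSPIT α T ∧ ∀ i, DesP α ordC T i → i ∈ S} with hA
  set B := {T | IsSPIT α T ∧ ∀ i, DesP α ordR T i → i ∈ S} with hB
  set Φ : (ℕ × ℕ → ℕ) → (ℕ × ℕ → ℕ) := fun T => rebuild α ordR (fun r => blk S (T r)) with hΦ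
  set Ψ : (ℕ × ℕ → ℕ) → (ℕ × ℕ → ℕ) := fun T => rebuild α ordC (fun r => blk S (T r)) with hΨ
  have hAmaps : ∀ T ∈ A, Φ T ∈ B := by
    rintro T ⟨hspit, hdes⟩
    have hL := (spit_iff_local hα).1 hspit
    have hg := blkT_isG hα (fun p q => ordC_total) (fun p q r => ordC_trans)
      (fun p q => ordC_asymm) hcov2C hL hdes
    refine ⟨(spit_iff_local hα).2 ?_, ?_⟩
    · exact rebuild_local hα (fun p q => ordR_total) (fun p q r => ordR_trans)
        (fun p q => ordR_asymm) hcov1R hcov2R hg.1 hg.2.1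
    · exact des_rebuild (fun p q => ordR_total) (fun p q r => ordR_trans)
        (fun p q => ordR_asymm) hg.2.2
  have hBmaps : ∀ T ∈ B, Ψ T ∈ A := by
    rintro T ⟨hspit, hdes⟩
    have hL := (spit_iff_local hα).1 hspit
    have hg := blkT_isG hα (fun p q => ordR_total) (fun p q r => ordR_trans)
      (fun p q => ordR_asymm) hcov2R hL hdes
    refine ⟨(spit_iff_local hα).2 ?_, ?_⟩
    · exact rebuild_local hα (fun p q => ordC_total) (fun p q r => ordC_trans)
        (fun p q => ordC_asymm) hcov1C hcov2C hg.1 hg.2.1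
    · exact des_rebuild (fun p q => ordC_total) (fun p q r => ordC_trans)
        (fun p q => ordC_asymm) hg.2.2
  have hΨΦ : ∀ T ∈ A, Ψ (Φ T) = T := by
    rintro T ⟨hspit, hdes⟩
    have hL := (spit_iff_local hα).1 hspit
    have hg := blkT_isG hα (fun p q => ordC_total) (fun p q r => ordC_trans)
      (fun p q => ordC_asymm) hcov2C hL hdes
    funext p
    by_cases hp : p ∈ cd α
    · have hcongr : rebuild α ordC (fun r => blk S (Φ T r)) p
          = rebuild α ordC (fun r => blk S (T r)) p := by
        apply rebuild_congr
        intro q hq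
        exact blk_rebuild (fun p q => ordR_total) (fun p q r => ordR_trans)
          (fun p q => ordR_asymm) hg.2.2 hq
      calc Ψ (Φ T) p = rebuild α ordC (fun r => blk S (T r)) p := hcongr
        _ = T p := rank_identity (fun p q => ordC_total) (fun p q r => ordC_trans)
            (fun p q => ordC_asymm) hL hdes hp
    · have h1 : Ψ (Φ T) p = 0 := by
        show rebuild α ordC _ p = 0
        unfold rebuild
        rw [if_neg hp]
      rw [h1, hL.1.2 p hp]
  have hΦΨ : ∀ T ∈ B, Φ (Ψ T) = T := by
    rintro T ⟨hspit, hdes⟩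
    have hL := (spit_iff_local hα).1 hspit
    have hg := blkT_isG hα (fun p q => ordR_total) (fun p q r => ordR_trans)
      (fun p q => ordR_asymm) hcov2R hL hdes
    funext p
    by_cases hp : p ∈ cd α
    · have hcongr : rebuild α ordR (fun r => blk S (Ψ T r)) p
          = rebuild α ordR (fun r => blk S (T r)) p := by
        apply rebuild_congr
        intro q hq
        exact blk_rebuild (fun p q => ordC_total) (fun p q r => ordC_trans)
          (fun p q => ordC_asymm) hg.2.2 hq
      calc Φ (Ψ T) p = rebuild α ordR (fun r => blk S (T r)) p := hcongr
        _ = T p := rank_identity (fun p q => ordR_total) (fun p q r => ordR_trans)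
            (fun p q => ordR_asymm) hL hdes hp
    · have h1 : Φ (Ψ T) p = 0 := by
        show rebuild α ordR _ p = 0
        unfold rebuild
        rw [if_neg hp]
      rw [h1, hL.1.2 p hp]
  have hbij : Set.BijOn Φ A B := by
    refine ⟨hAmaps, ?_, ?_⟩
    · intro T1 h1 T2 h2 heq
      rw [← hΨΦ T1 h1, ← hΨΦ T2 h2, heq]
    · intro T' hT'
      exact ⟨Ψ T', hBmaps T' hT', hΦΨ T' hT'⟩
  rw [← hbij.image_eq, Set.ncard_image_of_injOn hbij.injOn]

lemma spitset_finite (α : List ℕ) : (SPITset α).Finite := by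
  classical
  apply Set.Finite.of_finite_image
    (f := fun T => (fun p : {x // x ∈ cd α} => (⟨min (T p.1) α.sum, by omega⟩ : Fin (α.sum + 1))))
  · exact Set.toFinite _
  · intro T1 hT1 T2 hT2 heq
    have hstd1 : IsStandardFilling α T1 := hT1.1.1
    have hstd2 : IsStandardFilling α T2 := hT2.1.1
    funext p
    by_cases hp : p ∈ cd α
    · have := congrFun heq ⟨p, hp⟩
      simp only [Fin.mk.injEq] at this
      have h1 := hstd1.1.1 (Finset.mem_coe.2 hp)
      have h2 := hstd2.1.1 (Finset.mem_coe.2 hp)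
      rw [Set.mem_Icc] at h1 h2
      omega
    · rw [hstd1.2 p hp, hstd2.2 p hp]

end Final


section Count

open scoped Classical

variable {n : ℕ} {α : List ℕ}

theorem subsetcard_eq (hα : IsPeakComposition n α) (S : Finset ℕ) :
    ((spitset_finite α).toFinset.filter fun T => DesWord (wC α T) ⊆ S).card
      = ((spitset_finite α).toFinset.filter fun T => DesWord (wR α T) ⊆ S).card := by
  have hC : (↑((spitset_finite α).toFinset.filter fun T => DesWord (wC α T) ⊆ S) : Set (ℕ × ℕ → ℕ))
      = {T | IsSPIT α T ∧ ∀ i, DesP α ordC T i → i ∈ S} := by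
    ext T
    simp only [Finset.coe_filter, Set.mem_setOf_eq, Set.Finite.mem_toFinset]
    constructor
    · rintro ⟨hT, hsub⟩
      exact ⟨hT, fun i hi => hsub ((mem_desWord_wC hT.1.1).2 hi)⟩
    · rintro ⟨hT, hsub⟩
      exact ⟨hT, fun i hi => hsub i ((mem_desWord_wC hT.1.1).1 hi)⟩
  have hR : (↑((spitset_finite α).toFinset.filter fun T => DesWord (wR α T) ⊆ S) : Set (ℕ × ℕ → ℕ))
      = {T | IsSPIT α T ∧ ∀ i, DesP α ordR T i → i ∈ S} := by
    ext T
    simp only [Finset.coe_filter, Set.mem_setOf_eq, Set.Finite.mem_toFinset]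
    constructor
    · rintro ⟨hT, hsub⟩
      exact ⟨hT, fun i hi => hsub ((mem_desWord_wR hT.1.1).2 hi)⟩
    · rintro ⟨hT, hsub⟩
      exact ⟨hT, fun i hi => hsub i ((mem_desWord_wR hT.1.1).1 hi)⟩
  have := subset_count_eq hα S
  rw [← hC, ← hR, Set.ncard_coe_finset, Set.ncard_coe_finset] at this
  exact this

theorem fiber_sum (w : List ℕ → (ℕ × ℕ → ℕ) → List ℕ) (S : Finset ℕ) :
    ((spitset_finite α).toFinset.filter fun T => DesWord (w α T) ⊆ S).card
      = ∑ D' ∈ S.powerset,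
        ((spitset_finite α).toFinset.filter fun T => DesWord (w α T) = D').card := by
  rw [Finset.card_eq_sum_card_fiberwise (f := fun T => DesWord (w α T)) (t := S.powerset)
    (fun T hT => Finset.mem_powerset.2 (Finset.mem_filter.1 hT).2)]
  apply Finset.sum_congr rfl
  intro D' hD'
  rw [Finset.mem_powerset] at hD'
  congr 1
  rw [Finset.filter_filter]
  apply Finset.filter_congr
  intro T _
  constructor
  · rintro ⟨h1, h2⟩; exact h2
  · intro h
    refine ⟨?_, h⟩
    show DesWord (w α T) ⊆ S
    rw [h]
    exact hD'

theorem count_eq (hα : IsPeakComposition n α) (D : Finset ℕ) :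
    ((spitset_finite α).toFinset.filter fun T => DesWord (wC α T) = D).card
      = ((spitset_finite α).toFinset.filter fun T => DesWord (wR α T) = D).card := by
  induction D using Finset.strongInduction with
  | _ S ih =>
    have h := (fiber_sum wC S).symm.trans ((subsetcard_eq hα S).trans (fiber_sum wR S))
    rw [← Finset.sum_erase_add _ _ (Finset.mem_powerset_self S),
      ← Finset.sum_erase_add _ _ (Finset.mem_powerset_self S)] at h
    have hsame : ∑ D' ∈ S.powerset.erase S,
          ((spitset_finite α).toFinset.filter fun T => DesWord (wC α T) = D').card
        = ∑ D' ∈ S.powerset.erase S,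
          ((spitset_finite α).toFinset.filter fun T => DesWord (wR α T) = D').card := by
      apply Finset.sum_congr rfl
      intro D' hD'
      rw [Finset.mem_erase, Finset.mem_powerset] at hD'
      exact ih D' (Finset.ssubset_iff_subset_ne.2 ⟨hD'.2, hD'.1⟩)
    omega

end Count

end Aux

/-- For every peak composition `α` of `n`, the multisets
`{Des(w_c(T)) : T ∈ SPIT(α)}` and `{Des(w_r(T)) : T ∈ SPIT(α)}` coincide; equivalently,
every subset `D ⊆ {1,…,n−1}` occurs with the same multiplicity in both families. -/
theorem descent_equidistribution (n : ℕ) (α : List ℕ) (hα : IsPeakComposition n α)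
    (D : Finset ℕ) :
    {T ∈ SPITset α | DesWord (wC α T) = D}.ncard =
      {T ∈ SPITset α | DesWord (wR α T) = D}.ncard := by
  classical
  have hsepC : {T ∈ SPITset α | DesWord (wC α T) = D}
      = ↑((spitset_finite α).toFinset.filter fun T => DesWord (wC α T) = D) := by
    ext T
    simp only [Finset.coe_filter, Set.mem_setOf_eq, Set.Finite.mem_toFinset, Set.mem_sep_iff,
      SPITset]
  have hsepR : {T ∈ SPITset α | DesWord (wR α T) = D}
      = ↑((spitset_finite α).toFinset.filter fun T => DesWord (wR α T) = D) := by
    ext T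
    simp only [Finset.coe_filter, Set.mem_setOf_eq, Set.Finite.mem_toFinset, Set.mem_sep_iff,
      SPITset]
  rw [hsepC, hsepR, Set.ncard_coe_finset, Set.ncard_coe_finset]
  exact count_eq hα D

end PaperSPIT
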